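/- The coalition-optimal secured set is monotone: if a player i in coalition S is secured under the coalition-optimal security strategy for S, then i is also secured under the coalition-optimal security strategy for any coalition T with S ⊆ T ⊆ N. -/

import Mathlib

open Finset

/-- In-neighbors of `i`: players `j` with an arc `(j, i)`. -/
def inN {V : Type*} [Fintype V] (A : V → V → Prop) [DecidableRel A] (i : V) : Finset V :=
  Finset.univ.filter fun j => A j i

/-- Cost incurred by a coalition `S` when exactly the players of `W ⊆ S` are
secured: secured players pay intrinsic cost plus link costs from unsecured
in-neighbors (worst-case beliefs about players outside the coalition), and
unsecured coalition members pay their penalties. -/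
noncomputable def coalCost {V : Type*} [Fintype V] [DecidableEq V]
    (A : V → V → Prop) [DecidableRel A] (θ L : V → ℝ) (ξ : V → V → ℝ)
    (S W : Finset V) : ℝ :=
  ∑ i ∈ W, (θ i + ∑ j ∈ inN A i \ W, ξ j i) + ∑ i ∈ S \ W, L i

lemma coalCost_rw {V : Type*} [Fintype V] [DecidableEq V]
    (A : V → V → Prop) [DecidableRel A] (θ L : V → ℝ) (ξ : V → V → ℝ)
    (S W : Finset V) :
    coalCost A θ L ξ S W =
      ∑ i : V, ((if i ∈ W then θ i else 0)
        + (∑ j : V, if A j i ∧ i ∈ W ∧ j ∉ W then ξ j i else 0)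
        + (if i ∈ S ∧ i ∉ W then L i else 0)) := by
  unfold coalCost
  rw [Finset.sum_add_distrib, Finset.sum_add_distrib]
  congr 1
  · rw [Finset.sum_add_distrib]
    congr 1
    · rw [← Finset.sum_filter]
      congr 1
      ext i; simp
    · have h2 : ∀ i : V, (∑ j ∈ inN A i \ W, ξ j i)
          = ∑ j : V, if A j i ∧ j ∉ W then ξ j i else 0 := by
        intro i
        rw [← Finset.sum_filter]
        congr 1
        ext j; simp [inN, And.comm]
      have hW : W = Finset.univ.filter (· ∈ W) := by ext x; simp
      conv_lhs => rw [hW]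
      rw [Finset.sum_filter]
      apply Finset.sum_congr rfl
      intro i _
      by_cases hi : i ∈ W <;> simp [hi, h2 i]
  · rw [← Finset.sum_filter]
    congr 1
    ext i; simp

lemma coalCost_submodular {V : Type*} [Fintype V] [DecidableEq V]
    (A : V → V → Prop) [DecidableRel A] (θ L : V → ℝ) (ξ : V → V → ℝ)
    (hL : ∀ i, 0 ≤ L i) (hξ : ∀ i j, 0 ≤ ξ i j)
    (S T : Finset V) (hST : S ⊆ T)
    (WS WT : Finset V) (hWSsub : WS ⊆ S) :
    coalCost A θ L ξ T (WS ∪ WT) + coalCost A θ L ξ S (WS ∩ WT)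
      ≤ coalCost A θ L ξ S WS + coalCost A θ L ξ T WT := by
  rw [coalCost_rw, coalCost_rw, coalCost_rw, coalCost_rw,
    ← Finset.sum_add_distrib, ← Finset.sum_add_distrib]
  apply Finset.sum_le_sum
  intro i _
  have ha : (if i ∈ WS ∪ WT then θ i else 0) + (if i ∈ WS ∩ WT then θ i else 0)
      = (if i ∈ WS then θ i else 0) + (if i ∈ WT then θ i else 0) := by
    by_cases h1 : i ∈ WS <;> by_cases h2 : i ∈ WT <;>
      simp [h1, h2, Finset.mem_union, Finset.mem_inter] <;> ring
  have hb : (if i ∈ T ∧ i ∉ WS ∪ WT then L i else 0) + (if i ∈ S ∧ i ∉ WS ∩ WT then L i else 0)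
      = (if i ∈ S ∧ i ∉ WS then L i else 0) + (if i ∈ T ∧ i ∉ WT then L i else 0) := by
    have k1 : i ∈ WS → i ∈ S := fun h => hWSsub h
    have k2 : i ∈ S → i ∈ T := fun h => hST h
    by_cases h1 : i ∈ WS <;> by_cases h2 : i ∈ WT <;> by_cases h3 : i ∈ S <;>
      by_cases h4 : i ∈ T <;>
      simp_all [Finset.mem_union, Finset.mem_inter] <;> ring
  have he : (∑ j : V, if A j i ∧ i ∈ WS ∪ WT ∧ j ∉ WS ∪ WT then ξ j i else 0)
      + (∑ j : V, if A j i ∧ i ∈ WS ∩ WT ∧ j ∉ WS ∩ WT then ξ j i else 0)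
      ≤ (∑ j : V, if A j i ∧ i ∈ WS ∧ j ∉ WS then ξ j i else 0)
      + (∑ j : V, if A j i ∧ i ∈ WT ∧ j ∉ WT then ξ j i else 0) := by
    rw [← Finset.sum_add_distrib, ← Finset.sum_add_distrib]
    apply Finset.sum_le_sum
    intro j _
    have := hξ j i
    by_cases hA : A j i <;> by_cases h1 : i ∈ WS <;> by_cases h2 : i ∈ WT <;>
      by_cases h3 : j ∈ WS <;> by_cases h4 : j ∈ WT <;>
      simp [hA, h1, h2, h3, h4, Finset.mem_union, Finset.mem_inter] <;> linarith
  linarith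

theorem coalition_secured_monotone {V : Type*} [Fintype V] [DecidableEq V]
    (A : V → V → Prop) [DecidableRel A] (θ L : V → ℝ) (ξ : V → V → ℝ)
    (hθ : ∀ i, 0 ≤ θ i) (hL : ∀ i, 0 ≤ L i) (hξ : ∀ i j, 0 ≤ ξ i j)
    (S T : Finset V) (hST : S ⊆ T)
    (WS WT : Finset V)
    (hWSsub : WS ⊆ S) (hWTsub : WT ⊆ T)
    -- `WS` is optimal for `S` …
    (hWSopt : ∀ W ⊆ S, coalCost A θ L ξ S WS ≤ coalCost A θ L ξ S W)
    -- … and maximal among optimal secured sets of `S`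
    (hWSmax : ∀ W ⊆ S, (∀ W' ⊆ S, coalCost A θ L ξ S W ≤ coalCost A θ L ξ S W') →
      W ⊆ WS)
    -- `WT` is optimal for `T` …
    (hWTopt : ∀ W ⊆ T, coalCost A θ L ξ T WT ≤ coalCost A θ L ξ T W)
    -- … and maximal among optimal secured sets of `T`
    (hWTmax : ∀ W ⊆ T, (∀ W' ⊆ T, coalCost A θ L ξ T W ≤ coalCost A θ L ξ T W') →
      W ⊆ WT) :
    WS ⊆ WT := by
  have hsub := coalCost_submodular A θ L ξ hL hξ S T hST WS WT hWSsub
  have hIS : WS ∩ WT ⊆ S := (Finset.inter_subset_left).trans hWSsub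
  have hUT : WS ∪ WT ⊆ T := Finset.union_subset (hWSsub.trans hST) hWTsub
  have h1 : coalCost A θ L ξ S WS ≤ coalCost A θ L ξ S (WS ∩ WT) := hWSopt _ hIS
  have h2 : coalCost A θ L ξ T (WS ∪ WT) ≤ coalCost A θ L ξ T WT := by linarith
  have hopt : ∀ W' ⊆ T, coalCost A θ L ξ T (WS ∪ WT) ≤ coalCost A θ L ξ T W' :=
    fun W' hW' => h2.trans (hWTopt W' hW')
  have := hWTmax (WS ∪ WT) hUT hopt
  exact (Finset.subset_union_left).trans this
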